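/- Let (E, C) be a finitely separated graph and define the relation u ⊸ v on vertices: there exists an admissible path α : u → v and a cycle β based at v such that α⁻¹βα is admissible. Then ⊸ is transitive. -/

import Mathlib

namespace SepGraphStmt

/-- A finitely separated graph: a directed graph with a colouring of the edges
such that edges of the same colour have the same range, and each colour class is finite.
(The colour classes with range `v` form the partition `C_v` of `r⁻¹(v)`.) -/
structure SepGraph (V E Λ : Type) where
  r : E → V
  s : E → V
  col : E → Λ
  col_range : ∀ e f, col e = col f → r e = r f
  col_finite : ∀ l : Λ, {e : E | col e = l}.Finite

variable {V E Λ : Type}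

/-- A letter of the double graph: an edge together with a direction
(`true` = the edge itself, `false` = its formal inverse). -/
abbrev Letter (E : Type) := E × Bool

def src (G : SepGraph V E Λ) (a : Letter E) : V :=
  if a.2 then G.s a.1 else G.r a.1

def rng (G : SepGraph V E Λ) (a : Letter E) : V :=
  if a.2 then G.r a.1 else G.s a.1

/-- Letter `b` may follow letter `a` in an admissible path
(words are written in application order: the first letter of a list is traversed first). -/
def ok (G : SepGraph V E Λ) (a b : Letter E) : Prop :=
  src G b = rng G a ∧
    (a.2 = false → b.2 = true → b.1 ≠ a.1) ∧
    (a.2 = true → b.2 = false → G.col b.1 ≠ G.col a.1)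

def Admissible (G : SepGraph V E Λ) (w : List (Letter E)) : Prop :=
  List.Chain' (ok G) w

/-- Formal inverse of a word. -/
def wInv (w : List (Letter E)) : List (Letter E) :=
  (w.map fun a => (a.1, !a.2)).reverse

/-- The source of the (nonempty) word is `v`. -/
def headIs (G : SepGraph V E Λ) (w : List (Letter E)) (v : V) : Prop :=
  ∀ a ∈ w.head?, src G a = v

/-- The range of the (nonempty) word is `v`. -/
def lastIs (G : SepGraph V E Λ) (w : List (Letter E)) (v : V) : Prop :=
  ∀ a ∈ w.getLast?, rng G a = v

/-- `w` is an admissible path from `u` to `v`. -/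
def IsPath (G : SepGraph V E Λ) (w : List (Letter E)) (u v : V) : Prop :=
  Admissible G w ∧ (w = [] → u = v) ∧ headIs G w u ∧ lastIs G w v

/-- `w` is a closed path based at `v`. -/
def IsClosed (G : SepGraph V E Λ) (w : List (Letter E)) (v : V) : Prop :=
  w ≠ [] ∧ Admissible G w ∧ headIs G w v ∧ lastIs G w v

/-- `w` is a cycle: a nontrivial path whose square is admissible. -/
def IsCycle (G : SepGraph V E Λ) (w : List (Letter E)) : Prop :=
  w ≠ [] ∧ Admissible G (w ++ w)

/-- `w` is a cycle based at `v`. -/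
def CycleAt (G : SepGraph V E Λ) (w : List (Letter E)) (v : V) : Prop :=
  IsCycle G w ∧ headIs G w v

/-- A nontrivial admissible path `w` allows a return: some `βw` is a closed path. -/
def AllowsReturn (G : SepGraph V E Λ) (w : List (Letter E)) : Prop :=
  w ≠ [] ∧ Admissible G w ∧ ∃ b u, IsClosed G (w ++ b) u

/-- A "returning item" at `v`: either an edge in `s⁻¹(v)` allowing a return,
or a colour class `X ∈ C_v` allowing a return. -/
def RetItem (G : SepGraph V E Λ) (v : V) : E ⊕ Λ → Prop
  | Sum.inl e => G.s e = v ∧ AllowsReturn G [(e, true)]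
  | Sum.inr l => ∃ e, G.col e = l ∧ G.r e = v ∧ AllowsReturn G [(e, false)]

/-- `v` is a branching vertex. -/
def Branching (G : SepGraph V E Λ) (v : V) : Prop :=
  ∃ x y z : E ⊕ Λ, x ≠ y ∧ x ≠ z ∧ y ≠ z ∧
    RetItem G v x ∧ RetItem G v y ∧ RetItem G v z

/-- The relation `u ⊸ v`: there is an admissible path `α : u → v` and a cycle `β`
based at `v` such that `α⁻¹βα` is admissible. -/
def Multimap (G : SepGraph V E Λ) (u v : V) : Prop :=
  ∃ α β, IsPath G α u v ∧ CycleAt G β v ∧ Admissible G (α ++ β ++ wInv α)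

/-- A word is positively oriented w.r.t. an orientation `o`. -/
def Pos (o : E → Bool) (w : List (Letter E)) : Prop := ∀ a ∈ w, a.2 = o a.1

/-- A word is negatively oriented w.r.t. an orientation `o`. -/
def Neg (o : E → Bool) (w : List (Letter E)) : Prop := ∀ a ∈ w, a.2 = !o a.1

/-- `o` is an orientation at `v` (Definition of orientation, with (2')). -/
def OrientAt (G : SepGraph V E Λ) (o : E → Bool) (v : V) : Prop :=
  ((∃ l : Λ, (∃ e, G.col e = l) ∧ (∀ e, (G.r e = v ∧ o e = false) ↔ G.col e = l)) ∧
    ∀ e, G.s e = v → o e = false) ∨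
  ((∀ e, G.r e = v → o e = true) ∧
    ∀ e f, G.s e = v → G.s f = v → o e = true → o f = true → e = f)

/-- `o` is a proper orientation at `v`. -/
def ProperOrientAt (G : SepGraph V E Λ) (o : E → Bool) (v : V) : Prop :=
  ((∃ l : Λ, (∃ e, G.col e = l) ∧ (∀ e, (G.r e = v ∧ o e = false) ↔ G.col e = l)) ∧
    ∀ e, G.s e = v → o e = false) ∨
  ((∀ e, G.r e = v → o e = true) ∧ ∃! e, G.s e = v ∧ o e = true)

/-- `w` is a base-simple closed path at `v`. -/
def BaseSimple (G : SepGraph V E Λ) (w : List (Letter E)) (v : V) : Prop :=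
  IsClosed G w v ∧
    ∀ p, p ≠ [] → p.length < w.length → p <+: w → ¬ lastIs G p v


/-- Formal inverse of a letter. -/
def inv (a : Letter E) : Letter E := (a.1, !a.2)

lemma inv_inv (a : Letter E) : inv (inv a) = a := by simp [inv]

lemma src_inv (G : SepGraph V E Λ) (a : Letter E) : src G (inv a) = rng G a := by
  rcases a with ⟨e, b⟩; cases b <;> simp [inv, src, rng]

lemma rng_inv (G : SepGraph V E Λ) (a : Letter E) : rng G (inv a) = src G a := by
  rcases a with ⟨e, b⟩; cases b <;> simp [inv, src, rng]

lemma ok_inv {G : SepGraph V E Λ} {a b : Letter E} (h : ok G a b) :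
    ok G (inv b) (inv a) := by
  obtain ⟨h1, h2, h3⟩ := h
  refine ⟨by rw [src_inv, rng_inv, h1], ?_, ?_⟩ <;>
    rcases a with ⟨ea, ba⟩ <;> rcases b with ⟨eb, bb⟩ <;>
    cases ba <;> cases bb <;> simp_all [inv] <;>
    first
      | exact Ne.symm (by assumption)
      | (intro hh; exact (by assumption : _ ≠ _) hh.symm)
      | tauto

lemma adm_wInv {G : SepGraph V E Λ} {w : List (Letter E)} (h : Admissible G w) :
    Admissible G (wInv w) := by
  unfold Admissible wInv List.Chain' at *
  rw [List.isChain_reverse, List.isChain_map]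
  exact List.IsChain.imp (fun a b hab => ok_inv hab) h

lemma head?_wInv (w : List (Letter E)) : (wInv w).head? = w.getLast?.map inv := by
  unfold wInv; rw [List.head?_reverse, List.getLast?_map]; rfl

lemma getLast?_wInv (w : List (Letter E)) : (wInv w).getLast? = w.head?.map inv := by
  unfold wInv; rw [List.getLast?_reverse, List.head?_map]; rfl

lemma wInv_append (x y : List (Letter E)) : wInv (x ++ y) = wInv y ++ wInv x := by
  unfold wInv; rw [List.map_append, List.reverse_append]

lemma adm_append {G : SepGraph V E Λ} {x y : List (Letter E)} :
    Admissible G (x ++ y) ↔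
      Admissible G x ∧ Admissible G y ∧
        ∀ a ∈ x.getLast?, ∀ b ∈ y.head?, ok G a b :=
  List.isChain_append

lemma key_lemma {G : SepGraph V E Λ} {a b h c : Letter E}
    (hrac : rng G a = src G c) (hrbc : rng G b = src G c)
    (hshc : src G h = src G c)
    (hba : ok G b (inv a)) (hbh : ok G b h)
    (h1 : ¬ ok G a c) (h2 : ¬ ok G b c) : ok G (inv h) c := by
  rcases c with ⟨ec, bc⟩; rcases a with ⟨ea, ba⟩
  rcases b with ⟨eb, bb⟩; rcases h with ⟨eh, bh⟩
  cases bc <;> cases ba <;> cases bb <;> cases bh <;>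
    simp_all [ok, src, rng, inv] <;> tauto

/-- The relation `u ⊸ v` on the vertices of a finitely separated graph
is transitive. -/
theorem stmt11 {V E Λ : Type} (G : SepGraph V E Λ) :
    Transitive (Multimap G) := by
  rintro u v w ⟨α, β, hα, hβ, hadm⟩ ⟨γ, δ, hγ, hδ, hadm'⟩
  by_cases hγe : γ = []
  · obtain rfl := hγ.2.1 hγe
    exact ⟨α, β, hα, hβ, hadm⟩
  by_cases hαe : α = []
  · obtain rfl := hα.2.1 hαe
    exact ⟨γ, δ, hγ, hδ, hadm'⟩
  have hβn : β ≠ [] := hβ.1.1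
  -- letters at the junctions
  set a := α.getLast hαe with ha
  set c := γ.head hγe with hc
  set b := β.getLast hβn with hb
  set hh := β.head hβn with hhh
  have haq : α.getLast? = some a := List.getLast?_eq_getLast hαe
  have hcq : γ.head? = some c := List.head?_eq_head hγe
  have hbq : β.getLast? = some b := List.getLast?_eq_getLast hβn
  have hhq : β.head? = some hh := List.head?_eq_head hβn
  -- facts from the admissibility of α ++ β ++ α⁻¹
  rw [adm_append] at hadm
  obtain ⟨hAαβ, hAαi, J2⟩ := hadm
  rw [adm_append] at hAαβ
  obtain ⟨hAα, hAβ, J1⟩ := hAαβ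
  have okah : ok G a hh :=
    J1 a (by rw [haq]; rfl) hh (by rw [hhq]; rfl)
  have okbai : ok G b (inv a) := by
    apply J2 b (by rw [List.getLast?_append, hbq]; rfl)
    rw [head?_wInv, haq]; rfl
  have okbh : ok G b hh := by
    have h2 := hβ.1.2
    rw [adm_append] at h2
    exact h2.2.2 b (by rw [hbq]; rfl) hh (by rw [hhq]; rfl)
  -- vertex facts
  have hrav : rng G a = v := hα.2.2.2 a (by rw [haq]; rfl)
  have hscv : src G c = v := hγ.2.2.1 c (by rw [hcq]; rfl)
  have hshv : src G hh = v := hβ.2 hh (by rw [hhq]; rfl)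
  have hrbv : rng G b = v := by rw [← okbh.1, hshv]
  -- choose the connecting word ρ
  have key : ∃ ρ r, Admissible G ρ ∧ ρ.head? = α.head? ∧
      ρ.getLast? = some r ∧ ok G r c := by
    by_cases hac : ok G a c
    · exact ⟨α, a, hAα, rfl, haq, hac⟩
    by_cases hbc : ok G b c
    · refine ⟨α ++ β, b, ?_, ?_, ?_, hbc⟩
      · exact adm_append.mpr ⟨hAα, hAβ, fun x hx y hy => by
          rw [haq] at hx; rw [hhq] at hy
          cases hx; cases hy; exact okah⟩
      · exact List.head?_append_of_ne_nil α hαe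
      · rw [List.getLast?_append, hbq]; rfl
    · refine ⟨α ++ wInv β, inv hh, ?_, ?_, ?_, ?_⟩
      · refine adm_append.mpr ⟨hAα, adm_wInv hAβ, fun x hx y hy => ?_⟩
        rw [haq] at hx; rw [head?_wInv, hbq] at hy
        cases hx; cases hy
        have h3 := ok_inv okbai
        rwa [inv_inv] at h3
      · exact List.head?_append_of_ne_nil α hαe
      · rw [List.getLast?_append, getLast?_wInv, hhq]; rfl
      · exact key_lemma (by rw [hrav, hscv]) (by rw [hrbv, hscv])
          (by rw [hshv, hscv]) okbai okbh hac hbc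
  obtain ⟨ρ, r, hAρ, hρhead, hρlast, hrc⟩ := key
  have hρn : ρ ≠ [] := by
    intro h; rw [h] at hρlast; simp at hρlast
  have hμn : ρ ++ γ ≠ [] := by simp [hρn]
  have hAγ : Admissible G γ := hγ.1
  have hAμ : Admissible G (ρ ++ γ) :=
    adm_append.mpr ⟨hAρ, hAγ, fun x hx y hy => by
      rw [hρlast] at hx; rw [hcq] at hy; cases hx; cases hy; exact hrc⟩
  refine ⟨ρ ++ γ, δ, ⟨hAμ, fun h => absurd h hμn, ?_, ?_⟩, hδ, ?_⟩
  · -- headIs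
    intro x hx
    rw [List.head?_append_of_ne_nil ρ hρn, hρhead] at hx
    exact hα.2.2.1 x hx
  · -- lastIs
    intro x hx
    rw [List.getLast?_append, List.getLast?_eq_getLast hγe] at hx
    exact hγ.2.2.2 x (by rw [List.getLast?_eq_getLast hγe]; simpa using hx)
  · -- admissibility of the conjugated word
    have hQhead : ((γ ++ δ) ++ wInv γ).head? = some c := by
      rw [List.head?_append_of_ne_nil _ (by simp [hγe]),
        List.head?_append_of_ne_nil γ hγe, hcq]
    have hQlast : ((γ ++ δ) ++ wInv γ).getLast? = some (inv c) := by
      rw [List.getLast?_append, getLast?_wInv, hcq]; rfl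
    have hmain : Admissible G (ρ ++ (((γ ++ δ) ++ wInv γ) ++ wInv ρ)) := by
      refine adm_append.mpr ⟨hAρ, ?_, fun x hx y hy => ?_⟩
      · refine adm_append.mpr ⟨hadm', adm_wInv hAρ, fun x hx y hy => ?_⟩
        rw [hQlast] at hx
        rw [head?_wInv, hρlast] at hy
        cases hx; cases hy
        exact ok_inv hrc
      · rw [hρlast] at hx
        rw [List.head?_append_of_ne_nil _ (by simp [hγe]), hQhead] at hy
        cases hx; cases hy
        exact hrc
    have heq : (ρ ++ γ) ++ δ ++ wInv (ρ ++ γ)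
        = ρ ++ (((γ ++ δ) ++ wInv γ) ++ wInv ρ) := by
      rw [wInv_append]; simp [List.append_assoc]
    rwa [heq]


end SepGraphStmt
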